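/- Let k and j be positive integers. Then ∑ 1/(i_1 ⋯ i_j), summed over all j-tuples (i_1,…,i_j) of positive integers with i_1 + ⋯ + i_j = k, equals ∑ 1/(w_1 ⋯ w_j), summed over all j-tuples (w_1,…,w_j) of pairwise distinct elements of {1,…,k} whose maximum is exactly k. This is an identity of rational numbers. -/

import Mathlib

open Finset

namespace LubellAux

/-- Sum over compositions of `k` into `j` positive parts of reciprocal products. -/
noncomputable def A (k j : ℕ) : ℚ :=
  ∑ i ∈ (Finset.Nat.antidiagonalTuple j k).filter (fun i => ∀ s, 0 < i s),
    1 / ∏ s, (i s : ℚ)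

/-- Sum over injective `r`-tuples valued in `[1,n]` of reciprocal products. -/
noncomputable def D (n r : ℕ) : ℚ :=
  ∑ w ∈ (Fintype.piFinset fun _ : Fin r => Finset.Icc 1 n).filter
      (fun w => Function.Injective w),
    1 / ∏ i, (w i : ℚ)

noncomputable def S (n r : ℕ) : ℚ := ∑ m ∈ Finset.range (n + 1), A m r

lemma A_zero_zero : A 0 0 = 1 := by
  simp [A]

lemma A_succ_zero (m : ℕ) : A (m + 1) 0 = 0 := by
  simp [A]

lemma A_zero_succ (r : ℕ) : A 0 (r + 1) = 0 := by
  rw [A, Finset.sum_eq_zero]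
  intro i hi
  simp only [mem_filter, Finset.Nat.mem_antidiagonalTuple] at hi
  have h0 := hi.2 0
  have := Finset.sum_eq_zero_iff.mp hi.1 0 (Finset.mem_univ 0)
  omega

lemma D_zero_aux (r : ℕ) : D 0 (r + 1) = 0 := by
  rw [D, Finset.sum_eq_zero]
  intro w hw
  simp only [mem_filter, Fintype.mem_piFinset] at hw
  have := hw.1 0
  simp at this

lemma D_zero_r (r : ℕ) : D r 0 = 1 := by
  rw [D]
  rw [show (Fintype.piFinset fun _ : Fin 0 => Finset.Icc 1 r).filter
      (fun w => Function.Injective w) = {fun i => i.elim0} from by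
    apply Finset.ext; intro w
    simp only [mem_filter, Fintype.mem_piFinset, Finset.mem_singleton]
    constructor
    · intro _; funext i; exact i.elim0
    · rintro rfl
      exact ⟨fun a => a.elim0, fun a => a.elim0⟩]
  simp

/-- Splitting off the first coordinate of a composition. -/
lemma cons_split (g : ℕ → ℚ) (k r : ℕ) :
    ∑ i ∈ (Finset.Nat.antidiagonalTuple (r + 1) k).filter (fun i => ∀ s, 0 < i s),
      g (i 0) / ∏ s, (i s : ℚ) =
    ∑ a ∈ Finset.Icc 1 k,
      ∑ u ∈ (Finset.Nat.antidiagonalTuple r (k - a)).filter (fun u => ∀ s, 0 < u s),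
        g a / ((a : ℚ) * ∏ s, (u s : ℚ)) := by
  rw [Finset.sum_sigma']
  refine Finset.sum_nbij' (fun i => ⟨i 0, Fin.tail i⟩) (fun p => Fin.cons p.1 p.2)
    ?_ ?_ ?_ ?_ ?_
  · intro i hi
    simp only [mem_filter, Finset.Nat.mem_antidiagonalTuple] at hi
    obtain ⟨hsum, hpos⟩ := hi
    rw [Fin.sum_univ_succ] at hsum
    simp only [Finset.mem_sigma, Finset.mem_Icc, mem_filter,
      Finset.Nat.mem_antidiagonalTuple]
    have h0 := hpos 0
    refine ⟨⟨h0, by omega⟩, by simp [Fin.tail]; omega, fun s => hpos s.succ⟩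
  · rintro ⟨a, u⟩ hp
    simp only [Finset.mem_sigma, Finset.mem_Icc, mem_filter,
      Finset.Nat.mem_antidiagonalTuple] at hp
    obtain ⟨⟨ha1, hak⟩, husum, hupos⟩ := hp
    simp only [mem_filter, Finset.Nat.mem_antidiagonalTuple]
    constructor
    · rw [Fin.sum_cons, husum]; omega
    · intro s
      refine Fin.cases ?_ ?_ s
      · simp; omega
      · intro t; simpa using hupos t
  · intro i _; dsimp only; exact Fin.cons_self_tail i
  · rintro ⟨a, u⟩ _
    simp [Fin.tail_cons]
  · intro i _
    simp [Fin.prod_univ_succ, Fin.tail]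

lemma cons_A (k r : ℕ) :
    A k (r + 1) = ∑ a ∈ Finset.Icc 1 k, (1 / (a : ℚ)) * A (k - a) r := by
  rw [A]
  have := cons_split (fun _ => 1) k r
  rw [this]
  refine Finset.sum_congr rfl fun a ha => ?_
  rw [A, Finset.mul_sum]
  refine Finset.sum_congr rfl fun u hu => ?_
  rw [one_div, one_div, one_div, mul_inv, mul_comm]

/-- Value of coordinate `s` summed over compositions doesn't depend on `s`. -/
lemma coord_sym (k r : ℕ) (s : Fin (r + 1)) :
    ∑ i ∈ (Finset.Nat.antidiagonalTuple (r + 1) k).filter (fun i => ∀ t, 0 < i t),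
      (i s : ℚ) / ∏ t, (i t : ℚ) =
    ∑ i ∈ (Finset.Nat.antidiagonalTuple (r + 1) k).filter (fun i => ∀ t, 0 < i t),
      (i 0 : ℚ) / ∏ t, (i t : ℚ) := by
  refine Finset.sum_nbij' (fun i => i ∘ Equiv.swap 0 s) (fun i => i ∘ Equiv.swap 0 s)
    ?_ ?_ ?_ ?_ ?_
  · intro i hi
    simp only [mem_filter, Finset.Nat.mem_antidiagonalTuple] at hi ⊢
    exact ⟨by rw [← hi.1]; exact Equiv.sum_comp _ i, fun t => hi.2 _⟩
  · intro i hi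
    simp only [mem_filter, Finset.Nat.mem_antidiagonalTuple] at hi ⊢
    exact ⟨by rw [← hi.1]; exact Equiv.sum_comp _ i, fun t => hi.2 _⟩
  · intro i _; funext t; simp
  · intro i _; funext t; simp
  · intro i _
    simp only [Function.comp_apply]
    rw [Equiv.swap_apply_left]
    congr 1
    exact (Equiv.prod_comp (Equiv.swap 0 s) (fun t => (i t : ℚ))).symm

/-- `k * A k (r+1) = (r+1) * S (k-1) r` for `k ≥ 1`. -/
lemma key_A (k r : ℕ) (hk : 0 < k) :
    (k : ℚ) * A k (r + 1) = (r + 1) * S (k - 1) r := by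
  -- step 1: k * A = sum over coordinates
  have h1 : (k : ℚ) * A k (r + 1) =
      ∑ s : Fin (r + 1),
        ∑ i ∈ (Finset.Nat.antidiagonalTuple (r + 1) k).filter (fun i => ∀ t, 0 < i t),
          (i s : ℚ) / ∏ t, (i t : ℚ) := by
    rw [A, Finset.mul_sum, Finset.sum_comm]
    refine Finset.sum_congr rfl fun i hi => ?_
    simp only [mem_filter, Finset.Nat.mem_antidiagonalTuple] at hi
    rw [← Finset.sum_div, ← Nat.cast_sum, hi.1]
    rw [mul_one_div]
  rw [h1]
  have h2 : ∀ s : Fin (r + 1),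
      ∑ i ∈ (Finset.Nat.antidiagonalTuple (r + 1) k).filter (fun i => ∀ t, 0 < i t),
        (i s : ℚ) / ∏ t, (i t : ℚ) = S (k - 1) r := by
    intro s
    rw [coord_sym, cons_split (fun a => (a : ℚ)) k r]
    have h3 : ∀ a ∈ Finset.Icc 1 k,
        ∑ u ∈ (Finset.Nat.antidiagonalTuple r (k - a)).filter (fun u => ∀ t, 0 < u t),
          (a : ℚ) / ((a : ℚ) * ∏ t, (u t : ℚ)) = A (k - a) r := by
      intro a ha
      simp only [Finset.mem_Icc] at ha
      rw [A]
      refine Finset.sum_congr rfl fun u _ => ?_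
      have ha0 : (a : ℚ) ≠ 0 := by exact_mod_cast Nat.one_le_iff_ne_zero.mp ha.1
      rw [div_mul_eq_div_div, div_self ha0]
    rw [Finset.sum_congr rfl h3, S]
    refine Finset.sum_nbij' (fun a => k - a) (fun m => k - m) ?_ ?_ ?_ ?_ ?_
    · intro a ha; simp only [Finset.mem_Icc] at ha; simp only [Finset.mem_range]; omega
    · intro m hm; simp only [Finset.mem_range] at hm; simp only [Finset.mem_Icc]; omega
    · intro a ha; simp only [Finset.mem_Icc] at ha; omega
    · intro m hm; simp only [Finset.mem_range] at hm; omega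
    · intro a _; rfl
  rw [Finset.sum_congr rfl fun s _ => h2 s]
  simp [Finset.sum_const, mul_comm]

lemma insertNth_inj {r n : ℕ} (s : Fin (r + 1)) (u : Fin r → ℕ)
    (hu : Function.Injective u) (hne : ∀ t, u t ≠ n) :
    Function.Injective (s.insertNth n u) := by
  intro a b hab
  rcases eq_or_ne a s with ha | ha
  · rcases eq_or_ne b s with hb | hb
    · rw [ha, hb]
    · exfalso
      obtain ⟨b', rfl⟩ := Fin.exists_succAbove_eq hb
      rw [ha, Fin.insertNth_apply_same, Fin.insertNth_apply_succAbove] at hab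
      exact hne b' hab.symm
  · obtain ⟨a', rfl⟩ := Fin.exists_succAbove_eq ha
    rcases eq_or_ne b s with hb | hb
    · exfalso
      rw [hb, Fin.insertNth_apply_succAbove, Fin.insertNth_apply_same] at hab
      exact hne a' hab
    · obtain ⟨b', rfl⟩ := Fin.exists_succAbove_eq hb
      rw [Fin.insertNth_apply_succAbove, Fin.insertNth_apply_succAbove] at hab
      rw [hu hab]

lemma insert_sum (n r : ℕ) (hn : 0 < n) (s : Fin (r + 1)) :
    ∑ w ∈ (Fintype.piFinset fun _ : Fin (r + 1) => Finset.Icc 1 n).filter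
        (fun w => Function.Injective w ∧ w s = n), 1 / ∏ i, (w i : ℚ) =
    (1 / (n : ℚ)) * D (n - 1) r := by
  rw [D, Finset.mul_sum]
  refine Finset.sum_nbij' (fun w => s.removeNth w) (fun u => s.insertNth n u)
    ?_ ?_ ?_ ?_ ?_
  · intro w hw
    simp only [mem_filter, Fintype.mem_piFinset, Finset.mem_Icc] at hw ⊢
    obtain ⟨hmem, hinj, hws⟩ := hw
    refine ⟨fun t => ?_, hinj.comp (Fin.succAbove_right_injective (p := s))⟩
    have h1 := hmem (s.succAbove t)
    have h2 : w (s.succAbove t) ≠ n := by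
      rw [← hws]
      exact fun h => Fin.succAbove_ne s t (hinj h)
    simp only [Fin.removeNth]
    omega
  · intro u hu
    simp only [mem_filter, Fintype.mem_piFinset, Finset.mem_Icc] at hu ⊢
    obtain ⟨hmem, hinj⟩ := hu
    have hne : ∀ t, u t ≠ n := fun t => by have := hmem t; omega
    refine ⟨fun a => ?_, insertNth_inj s u hinj hne, by rw [Fin.insertNth_apply_same]⟩
    rcases eq_or_ne a s with rfl | ha
    · rw [Fin.insertNth_apply_same]; omega
    · obtain ⟨a', rfl⟩ := Fin.exists_succAbove_eq ha
      rw [Fin.insertNth_apply_succAbove]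
      have := hmem a'; omega
  · intro w hw
    simp only [mem_filter] at hw
    rw [Fin.insertNth_removeNth, ← hw.2.2, Function.update_eq_self]
  · intro u _
    rw [Fin.removeNth_insertNth]
  · intro w hw
    simp only [mem_filter] at hw
    rw [Fin.prod_univ_succAbove (fun i => (w i : ℚ)) s, hw.2.2]
    rw [one_div_mul_one_div]
    rfl

lemma exists_split (v r : ℕ) (X : Finset ℕ) (f : (Fin (r + 1) → ℕ) → ℚ) :
    ∑ w ∈ (Fintype.piFinset fun _ : Fin (r + 1) => X).filter
        (fun w => Function.Injective w ∧ ∃ i, w i = v), f w =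
    ∑ s : Fin (r + 1), ∑ w ∈ (Fintype.piFinset fun _ : Fin (r + 1) => X).filter
        (fun w => Function.Injective w ∧ w s = v), f w := by
  rw [show (Fintype.piFinset fun _ : Fin (r + 1) => X).filter
        (fun w => Function.Injective w ∧ ∃ i, w i = v) =
      Finset.univ.biUnion (fun s : Fin (r + 1) =>
        (Fintype.piFinset fun _ : Fin (r + 1) => X).filter
          (fun w => Function.Injective w ∧ w s = v)) from ?_]
  · rw [Finset.sum_biUnion ?_]
    intro a _ b _ hab
    simp only [Finset.disjoint_left, mem_filter]
    rintro w ⟨_, hinj, hwa⟩ ⟨_, _, hwb⟩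
    exact hab (hinj (hwa.trans hwb.symm))
  · apply Finset.ext
    intro w
    simp only [Finset.mem_biUnion, mem_filter, Finset.mem_univ, true_and]
    tauto

lemma D_succ (n r : ℕ) :
    D (n + 1) (r + 1) = D n (r + 1) + (r + 1) * (1 / ((n : ℚ) + 1)) * D n r := by
  have htot := Finset.sum_filter_add_sum_filter_not
    ((Fintype.piFinset fun _ : Fin (r + 1) => Finset.Icc 1 (n + 1)).filter
      (fun w => Function.Injective w))
    (fun w => ∃ i, w i = n + 1) (fun w => 1 / ∏ i, (w i : ℚ))
  have hnot : ∑ w ∈ (((Fintype.piFinset fun _ : Fin (r + 1) => Finset.Icc 1 (n + 1)).filter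
        (fun w => Function.Injective w)).filter (fun w => ¬∃ i, w i = n + 1)),
      1 / ∏ i, (w i : ℚ) = D n (r + 1) := by
    rw [D]
    apply Finset.sum_congr _ (fun _ _ => rfl)
    apply Finset.ext
    intro w
    simp only [mem_filter, Fintype.mem_piFinset, Finset.mem_Icc, not_exists]
    constructor
    · rintro ⟨⟨hmem, hinj⟩, hne⟩
      exact ⟨fun a => by have := hmem a; have := hne a; omega, hinj⟩
    · rintro ⟨hmem, hinj⟩
      exact ⟨⟨fun a => by have := hmem a; omega, hinj⟩, fun a => by have := hmem a; omega⟩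
  have hyes : ∑ w ∈ (((Fintype.piFinset fun _ : Fin (r + 1) => Finset.Icc 1 (n + 1)).filter
        (fun w => Function.Injective w)).filter (fun w => ∃ i, w i = n + 1)),
      1 / ∏ i, (w i : ℚ) = (r + 1) * (1 / ((n : ℚ) + 1)) * D n r := by
    rw [Finset.filter_filter, exists_split]
    have h1 : ∀ s : Fin (r + 1),
        ∑ w ∈ (Fintype.piFinset fun _ : Fin (r + 1) => Finset.Icc 1 (n + 1)).filter
          (fun w => Function.Injective w ∧ w s = n + 1), 1 / ∏ i, (w i : ℚ) =
        (1 / ((n + 1 : ℕ) : ℚ)) * D (n + 1 - 1) r :=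
      fun s => insert_sum (n + 1) r (Nat.succ_pos n) s
    rw [Finset.sum_congr rfl fun s _ => h1 s, Finset.sum_const, Finset.card_univ,
      Fintype.card_fin, nsmul_eq_mul]
    push_cast
    ring
  have hD : D (n + 1) (r + 1) =
      ∑ w ∈ ((Fintype.piFinset fun _ : Fin (r + 1) => Finset.Icc 1 (n + 1)).filter
        (fun w => Function.Injective w)), 1 / ∏ i, (w i : ℚ) := rfl
  rw [hD, ← htot, hnot, hyes, add_comm]

lemma S_eq_D : ∀ n r, S n r = D n r := by
  intro n
  induction n with
  | zero =>
    intro r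
    cases r with
    | zero => rw [S, D_zero_r]; simp [A_zero_zero]
    | succ r => rw [S, D_zero_aux]; simp [A_zero_succ]
  | succ n ih =>
    intro r
    have hS : S (n + 1) r = S n r + A (n + 1) r := by
      rw [S, S, Finset.sum_range_succ]
    cases r with
    | zero =>
      rw [hS, A_succ_zero, ih, D_zero_r, D_zero_r, add_zero]
    | succ r =>
      rw [hS, ih, D_succ]
      congr 1
      have hkey := key_A (n + 1) r (Nat.succ_pos n)
      have hn1 : ((n : ℚ) + 1) ≠ 0 := by positivity
      simp only [Nat.add_sub_cancel] at hkey
      rw [ih] at hkey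
      push_cast at hkey ⊢
      field_simp at hkey ⊢
      linarith

end LubellAux

theorem lubell_refinement (k j : ℕ) (hk : 0 < k) (hj : 0 < j) :
    ∑ i ∈ (Finset.Nat.antidiagonalTuple j k).filter (fun i => ∀ s, 0 < i s),
      1 / ∏ s, (i s : ℚ) =
    ∑ w ∈ (Fintype.piFinset fun _ : Fin j => Finset.Icc 1 k).filter
        (fun w => Function.Injective w ∧ ∃ i, w i = k),
      1 / ∏ i, (w i : ℚ) := by
  obtain ⟨r, rfl⟩ : ∃ r, j = r + 1 := ⟨j - 1, by omega⟩
  rw [show (∑ i ∈ (Finset.Nat.antidiagonalTuple (r+1) k).filter (fun i => ∀ s, 0 < i s),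
      1 / ∏ s, (i s : ℚ)) = LubellAux.A k (r + 1) from rfl]
  rw [LubellAux.exists_split]
  have h1 : ∀ s : Fin (r + 1),
      ∑ w ∈ (Fintype.piFinset fun _ : Fin (r + 1) => Finset.Icc 1 k).filter
        (fun w => Function.Injective w ∧ w s = k), 1 / ∏ i, (w i : ℚ) =
      (1 / (k : ℚ)) * LubellAux.D (k - 1) r := fun s => LubellAux.insert_sum k r hk s
  rw [Finset.sum_congr rfl fun s _ => h1 s, Finset.sum_const, Finset.card_univ,
    Fintype.card_fin, nsmul_eq_mul]
  have hkey := LubellAux.key_A k r hk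
  rw [LubellAux.S_eq_D] at hkey
  have hk0 : (k : ℚ) ≠ 0 := by positivity
  push_cast at hkey ⊢
  field_simp at hkey ⊢
  linarith
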